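/- Let a_0, a_1, a_2 be positive integers with gcd(a_1, a_2) = gcd(a_0, a_1, a_2), and set g_1 = gcd(a_0, a_1) and g_2 = gcd(a_0, a_2). Then the quotient of ℤ³ by the subgroup generated by the two vectors (−a_0/g_1, a_1/g_1, 0) and (−a_0/g_2, 0, a_2/g_2) is a torsion-free abelian group. -/

import Mathlib

/-- If `gcd(a_1, a_2) = gcd(a_0, a_1, a_2)` and `g_1 = gcd(a_0, a_1)`,
`g_2 = gcd(a_0, a_2)`, then the quotient of `ℤ³` by the subgroup generated by
`(−a_0/g_1, a_1/g_1, 0)` and `(−a_0/g_2, 0, a_2/g_2)` is torsion-free. -/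
theorem quotient_by_row_lattice_torsionFree (a0 a1 a2 : ℕ)
    (h0 : 0 < a0) (h1 : 0 < a1) (h2 : 0 < a2)
    (h : Nat.gcd a1 a2 = Nat.gcd a0 (Nat.gcd a1 a2))
    (g1 g2 : ℕ) (hg1 : g1 = Nat.gcd a0 a1) (hg2 : g2 = Nat.gcd a0 a2) :
    ∀ g : ((Fin 3 → ℤ) ⧸ Submodule.span ℤ
        ({![-((a0 / g1 : ℕ) : ℤ), ((a1 / g1 : ℕ) : ℤ), 0],
          ![-((a0 / g2 : ℕ) : ℤ), 0, ((a2 / g2 : ℕ) : ℤ)]} : Set (Fin 3 → ℤ))),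
      g ≠ 0 → ¬IsOfFinAddOrder g := by
  subst hg1; subst hg2
  set p1 := a0 / Nat.gcd a0 a1 with hp1
  set q1 := a1 / Nat.gcd a0 a1 with hq1
  set p2 := a0 / Nat.gcd a0 a2 with hp2
  set q2 := a2 / Nat.gcd a0 a2 with hq2
  have hga1 : 0 < Nat.gcd a0 a1 := Nat.gcd_pos_of_pos_left _ h0
  have hga2 : 0 < Nat.gcd a0 a2 := Nat.gcd_pos_of_pos_left _ h0
  have hq1pos : 0 < q1 := Nat.div_pos (Nat.le_of_dvd h1 (Nat.gcd_dvd_right _ _)) hga1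
  have hq2pos : 0 < q2 := Nat.div_pos (Nat.le_of_dvd h2 (Nat.gcd_dvd_right _ _)) hga2
  have hcop1 : Nat.Coprime p1 q1 := Nat.coprime_div_gcd_div_gcd hga1
  have hcop2 : Nat.Coprime p2 q2 := Nat.coprime_div_gcd_div_gcd hga2
  have hgdvd : Nat.gcd a1 a2 ∣ a0 := by rw [h]; exact Nat.gcd_dvd_left _ _
  -- key valuation fact
  have key : ∀ p : ℕ, p.Prime → p ∣ q1 → p ∣ q2 → False := by
    intro p pp hpq1 hpq2
    have hv1 : a0.factorization p < a1.factorization p := by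
      have hpos := pp.factorization_pos_of_dvd hq1pos.ne' hpq1
      rw [hq1, Nat.factorization_div (Nat.gcd_dvd_right a0 a1)] at hpos
      rw [Finsupp.tsub_apply, Nat.factorization_gcd h0.ne' h1.ne',
        Finsupp.inf_apply] at hpos
      omega
    have hv2 : a0.factorization p < a2.factorization p := by
      have hpos := pp.factorization_pos_of_dvd hq2pos.ne' hpq2
      rw [hq2, Nat.factorization_div (Nat.gcd_dvd_right a0 a2)] at hpos
      rw [Finsupp.tsub_apply, Nat.factorization_gcd h0.ne' h2.ne',
        Finsupp.inf_apply] at hpos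
      omega
    have hle : (Nat.gcd a1 a2).factorization ≤ a0.factorization :=
      (Nat.factorization_le_iff_dvd (Nat.gcd_ne_zero_left h1.ne') h0.ne').mpr hgdvd
    have hle' := hle p
    rw [Nat.factorization_gcd h1.ne' h2.ne', Finsupp.inf_apply] at hle'
    omega
  have hcop12 : Nat.Coprime q1 q2 := by
    by_contra hc
    have hd : (Nat.gcd q1 q2).minFac.Prime := Nat.minFac_prime hc
    exact key _ hd ((Nat.gcd q1 q2).minFac_dvd.trans (Nat.gcd_dvd_left _ _))
      ((Nat.gcd q1 q2).minFac_dvd.trans (Nat.gcd_dvd_right _ _))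
  -- the linear functional with kernel equal to the span
  set v1 : Fin 3 → ℤ := ![-(p1 : ℤ), (q1 : ℤ), 0] with hv1def
  set v2 : Fin 3 → ℤ := ![-(p2 : ℤ), 0, (q2 : ℤ)] with hv2def
  set f : (Fin 3 → ℤ) →ₗ[ℤ] ℤ :=
    { toFun := fun x => (q1 : ℤ) * q2 * x 0 + (p1 : ℤ) * q2 * x 1 + (p2 : ℤ) * q1 * x 2
      map_add' := by intro x y; simp only [Pi.add_apply]; ring
      map_smul' := by intro c x; simp only [Pi.smul_apply, smul_eq_mul, RingHom.id_apply]; ring }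
    with hfdef
  have hker : Submodule.span ℤ ({v1, v2} : Set (Fin 3 → ℤ)) = LinearMap.ker f := by
    apply le_antisymm
    · rw [Submodule.span_le]
      rintro x (rfl | rfl) <;>
        simp [hfdef, hv1def, hv2def, LinearMap.mem_ker] <;> ring
    · intro x hx
      rw [LinearMap.mem_ker] at hx
      simp only [hfdef, LinearMap.coe_mk, AddHom.coe_mk] at hx
      have hQ1 : IsCoprime (q1 : ℤ) (p1 : ℤ) := Nat.isCoprime_iff_coprime.mpr hcop1.symm
      have hQ2 : IsCoprime (q2 : ℤ) (p2 : ℤ) := Nat.isCoprime_iff_coprime.mpr hcop2.symm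
      have hQ12 : IsCoprime (q1 : ℤ) (q2 : ℤ) := Nat.isCoprime_iff_coprime.mpr hcop12
      have hq1x : (q1 : ℤ) ∣ x 1 := by
        have hdvd : (q1 : ℤ) ∣ (p1 : ℤ) * ((q2 : ℤ) * x 1) := by
          refine ⟨-(q2 * x 0 + p2 * x 2), ?_⟩
          linear_combination hx
        exact hQ12.dvd_of_dvd_mul_left (hQ1.dvd_of_dvd_mul_left hdvd)
      have hq2x : (q2 : ℤ) ∣ x 2 := by
        have hdvd : (q2 : ℤ) ∣ (p2 : ℤ) * ((q1 : ℤ) * x 2) := by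
          refine ⟨-(q1 * x 0 + p1 * x 1), ?_⟩
          linear_combination hx
        exact hQ12.symm.dvd_of_dvd_mul_left (hQ2.dvd_of_dvd_mul_left hdvd)
      obtain ⟨c, hc⟩ := hq1x
      obtain ⟨d, hd⟩ := hq2x
      have hx0 : x 0 = -(p1 : ℤ) * c - (p2 : ℤ) * d := by
        have hne : (q1 : ℤ) * q2 ≠ 0 := by positivity
        apply mul_left_cancel₀ hne
        linear_combination hx - (p1 : ℤ) * q2 * hc - (p2 : ℤ) * q1 * hd
      rw [Submodule.mem_span_pair]
      refine ⟨c, d, ?_⟩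
      funext i
      fin_cases i
      · show c * (-(p1 : ℤ)) + d * (-(p2 : ℤ)) = x 0
        linear_combination -hx0
      · show c * (q1 : ℤ) + d * 0 = x 1
        linear_combination -hc
      · show c * 0 + d * (q2 : ℤ) = x 2
        linear_combination -hd
  rw [show ({![-((p1 : ℕ) : ℤ), ((q1 : ℕ) : ℤ), 0],
      ![-((p2 : ℕ) : ℤ), 0, ((q2 : ℕ) : ℤ)]} : Set (Fin 3 → ℤ)) = {v1, v2} from rfl]
  intro g hg hfin
  apply hg
  obtain ⟨y, rfl⟩ := Submodule.Quotient.mk_surjective _ g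
  obtain ⟨n, hn, hny⟩ := isOfFinAddOrder_iff_nsmul_eq_zero.mp hfin
  rw [← Nat.cast_smul_eq_nsmul ℤ, ← Submodule.Quotient.mk_smul,
    Submodule.Quotient.mk_eq_zero, hker, LinearMap.mem_ker, map_smul,
    smul_eq_mul, mul_eq_zero] at hny
  have hfy : f y = 0 := by
    rcases hny with h' | h'
    · exact absurd h' (by exact_mod_cast hn.ne')
    · exact h'
  rw [Submodule.Quotient.mk_eq_zero, hker, LinearMap.mem_ker]
  exact hfy
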